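/- arXiv:0807.2924 — 2 statements merged into one kernel-verified Lean document; each statement's English description precedes it below -/
import Mathlib

section
/- Let φ be an additive real-valued weight on C (φ(α ≫ β) = φ(α) + φ(β) for all composable morphisms), and define the linear operator D on H_γ by (D ξ)(α) = φ(α)·ξ(α). Then the commutators of D with the creation and annihilation operators are scalar multiples of those operators: D ∘ A_M − A_M ∘ D = φ(M)·A_M and D ∘ A_M^* − A_M^* ∘ D = −φ(M)·A_M^* as linear operators on H_γ; in particular, ‖(D ∘ A_M − A_M ∘ D) ξ‖ ≤ |φ(M)|·‖ξ‖ for all ξ ∈ H_γ, with ‖·‖ the norm induced by the inner product, so D has bounded commutators with A_M and A_M^*. -/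
open CategoryTheory
open scoped Classical

/-- The set of morphisms of `C` with target `γ₀`. -/
def MorTo (C : Type*) [Category C] (γ₀ : C) := Σ X : C, X ⟶ γ₀

/-- The annihilation operator `A_M` on `H_γ₀` associated to a morphism `M : G ⟶ G'`. -/
noncomputable def annih {C : Type*} [Category C] {γ₀ G G' : C}
    (M : G ⟶ G') (ξ : MorTo C γ₀ → ℂ) : MorTo C γ₀ → ℂ :=
  fun α => if h : ∃ β : G' ⟶ γ₀, α = ⟨G, M ≫ β⟩ then ξ ⟨G', h.choose⟩ else 0

/-- The creation operator `A_M^*` on `H_γ₀`. -/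
noncomputable def creat {C : Type*} [Category C] {γ₀ G G' : C}
    (M : G ⟶ G') (ξ : MorTo C γ₀ → ℂ) : MorTo C γ₀ → ℂ :=
  fun β => if h : ∃ b : G' ⟶ γ₀, β = ⟨G', b⟩ then ξ ⟨G, M ≫ h.choose⟩ else 0

/-- The diagonal operator `(D ξ)(α) = φ(α) · ξ(α)` on `H_γ₀` associated to an additive
weight `φ`. -/
noncomputable def Dop {C : Type*} [Category C] {γ₀ : C}
    (φ : ∀ X Y : C, (X ⟶ Y) → ℝ) (ξ : MorTo C γ₀ → ℂ) : MorTo C γ₀ → ℂ :=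
  fun α => ((φ α.1 γ₀ α.2 : ℝ) : ℂ) * ξ α

/-- The norm on `H_γ₀` induced by the inner product `⟨ξ, ξ'⟩ = Σ_α conj(ξ(α)) ξ'(α)`. -/
noncomputable def normH {C : Type*} [Category C] {γ₀ : C}
    (ξ : MorTo C γ₀ → ℂ) : ℝ :=
  Real.sqrt (∑ᶠ α : MorTo C γ₀, Complex.normSq (ξ α))

section Aux

open Function

variable {A I : Type*}

lemma normSq_support_subset (ξ : A → ℂ) :
    support (fun a => Complex.normSq (ξ a)) ⊆ support ξ := fun a ha => by
  simp only [mem_support] at *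
  exact fun h => ha (by simp [h])

lemma eta_support_finite (ξ η : A → ℂ) (hξ : (support ξ).Finite)
    (j k : I → A) (hval : ∀ i, η (j i) = ξ (k i))
    (hz : ∀ a, (∀ i, a ≠ j i) → η a = 0) (hk : Injective k) :
    (support η).Finite := by
  refine ((hξ.preimage hk.injOn).image j).subset ?_
  intro a ha
  rw [mem_support] at ha
  by_cases h : ∀ i, a ≠ j i
  · exact absurd (hz a h) ha
  · push_neg at h
    obtain ⟨i, rfl⟩ := h
    exact ⟨i, by rw [Set.mem_preimage, mem_support, ← hval]; exact ha, rfl⟩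

lemma key_sum_le (ξ η : A → ℂ) (hξ : (support ξ).Finite)
    (j k : I → A) (hj : Injective j) (hk : Injective k)
    (hval : ∀ i, η (j i) = ξ (k i))
    (hz : ∀ a, (∀ i, a ≠ j i) → η a = 0) :
    ∑ᶠ a, Complex.normSq (η a) ≤ ∑ᶠ a, Complex.normSq (ξ a) := by
  classical
  have hfin : (k ⁻¹' support ξ).Finite := hξ.preimage hk.injOn
  set s : Finset I := hfin.toFinset with hs
  have hsupη : support (fun a => Complex.normSq (η a)) ⊆ ↑(s.image j) := by
    intro a ha
    rw [mem_support] at ha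
    by_cases h : ∀ i, a ≠ j i
    · exact absurd (by simp [hz a h]) ha
    · push_neg at h
      obtain ⟨i, rfl⟩ := h
      have : η (j i) ≠ 0 := fun h0 => ha (by simp [h0])
      rw [hval] at this
      simp only [Finset.coe_image, Set.mem_image, Finset.mem_coe]
      exact ⟨i, by simp [hs, Set.Finite.mem_toFinset, mem_support, this], rfl⟩
  set t : Finset A := hξ.toFinset ∪ s.image k with ht
  have hsupξ : support (fun a => Complex.normSq (ξ a)) ⊆ ↑t := by
    intro a ha
    have := normSq_support_subset ξ ha
    simp [ht, Set.Finite.mem_toFinset]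
    exact Or.inl this
  rw [finsum_eq_finset_sum_of_support_subset _ hsupη,
      finsum_eq_finset_sum_of_support_subset _ hsupξ]
  rw [Finset.sum_image (fun a _ b _ h => hj h)]
  have : ∑ i ∈ s, Complex.normSq (η (j i)) = ∑ a ∈ s.image k, Complex.normSq (ξ a) := by
    rw [Finset.sum_image (fun a _ b _ h => hk h)]
    exact Finset.sum_congr rfl fun i _ => by rw [hval]
  rw [this]
  refine Finset.sum_le_sum_of_subset_of_nonneg (ht ▸ Finset.subset_union_right) ?_
  intro a _ _
  exact Complex.normSq_nonneg _

lemma normH_smul_aux (c : ℝ) (η : A → ℂ) (hη : (support η).Finite) :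
    Real.sqrt (∑ᶠ a, Complex.normSq (((c : ℂ) • η) a)) =
      |c| * Real.sqrt (∑ᶠ a, Complex.normSq (η a)) := by
  have h1 : ∀ a, Complex.normSq (((c : ℂ) • η) a) = (c * c) * Complex.normSq (η a) := by
    intro a
    simp [Complex.normSq_mul, Complex.normSq_ofReal]
  simp only [h1]
  rw [← mul_finsum _ _,
    Real.sqrt_mul (mul_self_nonneg c), Real.sqrt_mul_self_eq_abs]

end Aux

section Eval

variable {C : Type*} [Category C] {γ₀ G G' : C} (M : G ⟶ G')

lemma morTo_mk_inj {X : C} {a b : X ⟶ γ₀}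
    (h : (⟨X, a⟩ : MorTo C γ₀) = ⟨X, b⟩) : a = b :=
  sigma_mk_injective (β := fun Y : C => Y ⟶ γ₀) h

lemma annih_apply (hcancel : ∀ (X Y Z : C) (m : X ⟶ Y) (a b : Y ⟶ Z),
      m ≫ a = m ≫ b → a = b) (ξ : MorTo C γ₀ → ℂ) (β : G' ⟶ γ₀) :
    annih M ξ ⟨G, M ≫ β⟩ = ξ ⟨G', β⟩ := by
  have h : ∃ b : G' ⟶ γ₀, (⟨G, M ≫ β⟩ : MorTo C γ₀) = ⟨G, M ≫ b⟩ := ⟨β, rfl⟩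
  simp only [annih]
  refine (dif_pos h).trans ?_
  have e : β = h.choose := hcancel _ _ _ _ _ _ (morTo_mk_inj h.choose_spec)
  exact congrArg (fun c => ξ ⟨G', c⟩) e.symm

lemma annih_apply_zero (ξ : MorTo C γ₀ → ℂ) (α : MorTo C γ₀)
    (h : ¬ ∃ β : G' ⟶ γ₀, α = ⟨G, M ≫ β⟩) : annih M ξ α = 0 := by
  rw [annih, dif_neg h]

lemma creat_apply (ξ : MorTo C γ₀ → ℂ) (b : G' ⟶ γ₀) :
    creat M ξ ⟨G', b⟩ = ξ ⟨G, M ≫ b⟩ := by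
  have h : ∃ c : G' ⟶ γ₀, (⟨G', b⟩ : MorTo C γ₀) = ⟨G', c⟩ := ⟨b, rfl⟩
  simp only [creat]
  refine (dif_pos h).trans ?_
  have e : b = h.choose := morTo_mk_inj h.choose_spec
  exact congrArg (fun c => ξ ⟨G, M ≫ c⟩) e.symm

lemma creat_apply_zero (ξ : MorTo C γ₀ → ℂ) (β : MorTo C γ₀)
    (h : ¬ ∃ b : G' ⟶ γ₀, β = ⟨G', b⟩) : creat M ξ β = 0 := by
  rw [creat, dif_neg h]

end Eval

/-- For an additive real-valued weight `φ` on a left-cancellative small category, the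
commutators of the diagonal operator `D` with the creation and annihilation operators are
scalar multiples of those operators: `[D, A_M] = φ(M) · A_M` and
`[D, A_M^*] = -φ(M) · A_M^*`; in particular `‖[D, A_M] ξ‖ ≤ |φ(M)| ‖ξ‖`, so `D` has
bounded commutators with `A_M` and `A_M^*`. -/
theorem Dop_bounded_commutators
    {C : Type*} [Category C]
    (hcancel : ∀ (X Y Z : C) (m : X ⟶ Y) (a b : Y ⟶ Z), m ≫ a = m ≫ b → a = b)
    (φ : ∀ X Y : C, (X ⟶ Y) → ℝ)
    (hadd : ∀ (X Y Z : C) (a : X ⟶ Y) (b : Y ⟶ Z),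
      φ X Z (a ≫ b) = φ X Y a + φ Y Z b)
    (γ₀ G G' : C) (M : G ⟶ G') :
    (∀ ξ : MorTo C γ₀ → ℂ,
      (fun α => Dop φ (annih M ξ) α - annih M (Dop φ ξ) α) =
        ((φ G G' M : ℝ) : ℂ) • annih M ξ) ∧
    (∀ ξ : MorTo C γ₀ → ℂ,
      (fun β => Dop φ (creat M ξ) β - creat M (Dop φ ξ) β) =
        (-((φ G G' M : ℝ) : ℂ)) • creat M ξ) ∧
    (∀ ξ : MorTo C γ₀ → ℂ, (Function.support ξ).Finite →
      normH (fun α => Dop φ (annih M ξ) α - annih M (Dop φ ξ) α) ≤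
        |φ G G' M| * normH ξ) ∧
    (∀ ξ : MorTo C γ₀ → ℂ, (Function.support ξ).Finite →
      normH (fun β => Dop φ (creat M ξ) β - creat M (Dop φ ξ) β) ≤
        |φ G G' M| * normH ξ) := by

  have hMj : Function.Injective (fun β : G' ⟶ γ₀ => (⟨G, M ≫ β⟩ : MorTo C γ₀)) := by
    intro a b h
    exact hcancel _ _ _ _ _ _ (morTo_mk_inj h)
  have hej : Function.Injective (fun b : G' ⟶ γ₀ => (⟨G', b⟩ : MorTo C γ₀)) := by
    intro a b h
    exact morTo_mk_inj h
  have hcomm1 : ∀ ξ : MorTo C γ₀ → ℂ,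
      (fun α => Dop φ (annih M ξ) α - annih M (Dop φ ξ) α) =
        ((φ G G' M : ℝ) : ℂ) • annih M ξ := by
    intro ξ
    funext α
    by_cases h : ∃ β : G' ⟶ γ₀, α = ⟨G, M ≫ β⟩
    · obtain ⟨β, rfl⟩ := h
      change _ = ((φ G G' M : ℝ) : ℂ) * annih M ξ ⟨G, M ≫ β⟩
      simp only [Pi.smul_apply, smul_eq_mul, Dop,
        annih_apply M hcancel, hadd]
      push_cast
      ring
    · simp [Pi.smul_apply, Dop, annih_apply_zero M _ _ h]
  have hcomm2 : ∀ ξ : MorTo C γ₀ → ℂ,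
      (fun β => Dop φ (creat M ξ) β - creat M (Dop φ ξ) β) =
        (-((φ G G' M : ℝ) : ℂ)) • creat M ξ := by
    intro ξ
    funext β
    by_cases h : ∃ b : G' ⟶ γ₀, β = ⟨G', b⟩
    · obtain ⟨b, rfl⟩ := h
      change _ = (-((φ G G' M : ℝ) : ℂ)) * creat M ξ ⟨G', b⟩
      simp only [Pi.smul_apply, smul_eq_mul, Dop,
        creat_apply M, hadd]
      push_cast
      ring
    · simp [Pi.smul_apply, Dop, creat_apply_zero M _ _ h]
  refine ⟨hcomm1, hcomm2, ?_, ?_⟩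
  · intro ξ hfin
    rw [hcomm1 ξ]
    have hval : ∀ β : G' ⟶ γ₀,
        annih M ξ ⟨G, M ≫ β⟩ = ξ ⟨G', β⟩ := annih_apply M hcancel ξ
    have hz : ∀ a : MorTo C γ₀,
        (∀ β : G' ⟶ γ₀, a ≠ (⟨G, M ≫ β⟩ : MorTo C γ₀)) → annih M ξ a = 0 := by
      intro a ha
      exact annih_apply_zero M ξ a (fun ⟨β, hb⟩ => ha β hb)
    have hηfin := eta_support_finite ξ (annih M ξ) hfin _ _ hval hz hej
    rw [normH, normH, normH_smul_aux _ _ hηfin]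
    exact mul_le_mul_of_nonneg_left
      (Real.sqrt_le_sqrt (key_sum_le ξ (annih M ξ) hfin _ _ hMj hej hval hz))
      (abs_nonneg _)
  · intro ξ hfin
    rw [hcomm2 ξ]
    have hval : ∀ b : G' ⟶ γ₀,
        creat M ξ ⟨G', b⟩ = ξ ⟨G, M ≫ b⟩ := creat_apply M ξ
    have hz : ∀ a : MorTo C γ₀,
        (∀ b : G' ⟶ γ₀, a ≠ (⟨G', b⟩ : MorTo C γ₀)) → creat M ξ a = 0 := by
      intro a ha
      exact creat_apply_zero M ξ a (fun ⟨b, hb⟩ => ha b hb)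
    have hηfin := eta_support_finite ξ (creat M ξ) hfin _ _ hval hz hMj
    have hsmul : (-((φ G G' M : ℝ) : ℂ)) • creat M ξ
        = (((-φ G G' M : ℝ)) : ℂ) • creat M ξ := by push_cast; ring_nf
    rw [hsmul, normH, normH, normH_smul_aux _ _ hηfin, abs_neg]
    exact mul_le_mul_of_nonneg_left
      (Real.sqrt_le_sqrt (key_sum_le ξ (creat M ξ) hfin _ _ hej hMj hval hz))
      (abs_nonneg _)
end

section
/- Let χ be a real-valued function on the morphisms of C and χ₀ a real-valued function on the objects of C satisfying the inclusion–exclusion gluing rule χ(α ≫ β) = χ(α) + χ(β) − χ₀(Y) for all morphisms α : X ⟶ Y and β : Y ⟶ Z. Define σ_t : ℂ[C] → ℂ[C] for t ∈ ℝ by σ_t(f)(α) = exp(i·t·(χ(α) − χ₀(Z)))·f(α) for α : X ⟶ Z. Then each σ_t is a ℂ-algebra automorphism of ℂ[C] (σ_t(f₁ * f₂) = σ_t(f₁) * σ_t(f₂)), with σ_0 = id and σ_{t+s} = σ_t ∘ σ_s; i.e., any numerical invariant satisfying an inclusion–exclusion principle under gluing defines a time evolution on the convolution algebra. -/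
open CategoryTheory
open scoped Classical

/-- The set of all morphisms of a small category `C`. -/
def Mor (C : Type*) [Category C] := Σ (X : C) (Y : C), X ⟶ Y

/-- `CompTo α β γ` holds when `α` and `β` are composable morphisms and `α ≫ β = γ`. -/
def CompTo {C : Type*} [Category C] (α β γ : Mor C) : Prop :=
  ∃ (X Y Z : C) (a : X ⟶ Y) (b : Y ⟶ Z),
    α = ⟨X, Y, a⟩ ∧ β = ⟨Y, Z, b⟩ ∧ γ = ⟨X, Z, a ≫ b⟩

/-- The convolution product on `ℂ[C]`. -/
noncomputable def conv {C : Type*} [Category C] (f₁ f₂ : Mor C → ℂ) : Mor C → ℂ :=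
  fun γ => ∑ᶠ p : Mor C × Mor C,
    if CompTo p.1 p.2 γ then f₁ p.1 * f₂ p.2 else 0

/-- The evolution `σ_t(f)(α) = exp(i t (χ(α) - χ₀(target α))) · f(α)` associated to a
numerical invariant `χ` of morphisms and `χ₀` of objects. -/
noncomputable def sigmaChi {C : Type*} [Category C]
    (χ : ∀ X Y : C, (X ⟶ Y) → ℝ) (χ₀ : C → ℝ) (t : ℝ) (f : Mor C → ℂ) : Mor C → ℂ :=
  fun α => Complex.exp (Complex.I * (t : ℂ) *
    ((χ α.1 α.2.1 α.2.2 - χ₀ α.2.1 : ℝ) : ℂ)) * f α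

/-- A numerical invariant `χ` satisfying the inclusion–exclusion gluing rule
`χ(α ≫ β) = χ(α) + χ(β) - χ₀(Y)` defines a time evolution
`σ_t(f)(α) = exp(i t (χ(α) - χ₀(Z))) f(α)` on the convolution algebra `ℂ[C]`: each `σ_t`
is a ℂ-algebra automorphism and `t ↦ σ_t` is a one-parameter group. -/
theorem inclusion_exclusion_time_evolution
    {C : Type*} [Category C]
    (χ : ∀ X Y : C, (X ⟶ Y) → ℝ) (χ₀ : C → ℝ)
    (hglue : ∀ (X Y Z : C) (a : X ⟶ Y) (b : Y ⟶ Z),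
      χ X Z (a ≫ b) = χ X Y a + χ Y Z b - χ₀ Y) :
    (∀ (t : ℝ) (a b : ℂ) (f₁ f₂ : Mor C → ℂ),
      sigmaChi χ χ₀ t (a • f₁ + b • f₂) =
        a • sigmaChi χ χ₀ t f₁ + b • sigmaChi χ χ₀ t f₂) ∧
    (∀ (t : ℝ) (f₁ f₂ : Mor C → ℂ),
      (Function.support f₁).Finite → (Function.support f₂).Finite →
      sigmaChi χ χ₀ t (conv f₁ f₂) = conv (sigmaChi χ χ₀ t f₁) (sigmaChi χ χ₀ t f₂)) ∧
    (sigmaChi χ χ₀ 0 = (id : (Mor C → ℂ) → (Mor C → ℂ))) ∧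
    (∀ t s : ℝ, sigmaChi χ χ₀ (t + s) = sigmaChi χ χ₀ t ∘ sigmaChi χ χ₀ s) := by
  refine ⟨?_, ?_, ?_, ?_⟩
  · intro t a b f₁ f₂
    funext α
    simp only [sigmaChi, Pi.add_apply, Pi.smul_apply, smul_eq_mul]
    ring
  · intro t f₁ f₂ h1 h2
    funext γ
    have hfin : (Function.support fun p : Mor C × Mor C =>
        if CompTo p.1 p.2 γ then f₁ p.1 * f₂ p.2 else 0).Finite := by
      refine Set.Finite.subset ((h1.prod h2)) ?_
      intro p hp
      simp only [Function.support, Set.mem_setOf_eq] at hp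
      by_cases h : CompTo p.1 p.2 γ
      · simp only [h, if_true] at hp
        exact ⟨left_ne_zero_of_mul hp, right_ne_zero_of_mul hp⟩
      · simp [h] at hp
    simp only [sigmaChi, conv]
    rw [mul_finsum]
    refine finsum_congr fun p => ?_
    obtain ⟨α, β⟩ := p
    by_cases h : CompTo α β γ
    · simp only [h, if_true]
      obtain ⟨X, Y, Z, a, b, rfl, rfl, rfl⟩ := h
      have key : Complex.exp (Complex.I * (t : ℂ) *
            ((χ X Z (a ≫ b) - χ₀ Z : ℝ) : ℂ)) =
          Complex.exp (Complex.I * (t : ℂ) * ((χ X Y a - χ₀ Y : ℝ) : ℂ)) *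
          Complex.exp (Complex.I * (t : ℂ) * ((χ Y Z b - χ₀ Z : ℝ) : ℂ)) := by
        rw [← Complex.exp_add]
        congr 1
        rw [hglue]
        push_cast
        ring
      show Complex.exp (Complex.I * (t : ℂ) * ((χ X Z (a ≫ b) - χ₀ Z : ℝ) : ℂ)) *
          (f₁ ⟨X, Y, a⟩ * f₂ ⟨Y, Z, b⟩) = _
      rw [key]
      ring
    · simp [h]
  · funext f α
    simp [sigmaChi]
  · intro t s
    funext f α
    simp only [sigmaChi, Function.comp_apply]
    rw [← mul_assoc, ← Complex.exp_add]
    congr 2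
    push_cast
    ring
end
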